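/- Let S be a bounded selfadjoint operator on a complex Hilbert space K with spectrum contained in [γ, Γ], and let g : [γ, Γ] → ℂ be continuous such that |g(t) − λ| ≤ ρ for all t ∈ [γ, Γ], for some λ ∈ ℂ and ρ > 0. Then for every unit vector x ∈ K, |⟨S g(S) x, x⟩ − ⟨S x, x⟩⟨g(S) x, x⟩| ≤ ρ ⟨|S − ⟨S x, x⟩·1| x, x⟩ ≤ ρ (⟨S² x, x⟩ − ⟨S x, x⟩²)^{1/2}. -/

import Mathlib

open scoped InnerProductSpace

/-- The modulus `|T| = (T*T)^{1/2}` of a bounded operator. -/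
noncomputable def opAbs {K : Type*} [NormedAddCommGroup K] [InnerProductSpace ℂ K]
    [CompleteSpace K] (T : K →L[ℂ] K) : K →L[ℂ] K :=
  CFC.sqrt (star T * T)

set_option maxHeartbeats 1000000 in
set_option synthInstance.maxHeartbeats 400000 in
theorem quantum_lemma_bound
    {K : Type*} [NormedAddCommGroup K] [InnerProductSpace ℂ K] [CompleteSpace K]
    (S : K →L[ℂ] K) (hS : IsSelfAdjoint S) (γ Γ : ℝ)
    (hspec : spectrum ℝ S ⊆ Set.Icc γ Γ)
    (g : ℂ → ℂ) (hg : ContinuousOn g ((fun t : ℝ => (t : ℂ)) '' Set.Icc γ Γ))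
    (lam : ℂ) (ρ : ℝ) (hρ : 0 < ρ)
    (hbound : ∀ t ∈ Set.Icc γ Γ, ‖g (t : ℂ) - lam‖ ≤ ρ)
    (x : K) (hx : ‖x‖ = 1) :
    ‖⟪(S ∘L cfc g S) x, x⟫_ℂ - ⟪S x, x⟫_ℂ * ⟪(cfc g S) x, x⟫_ℂ‖ ≤
        ρ * (⟪(opAbs (S - ⟪S x, x⟫_ℂ • (1 : K →L[ℂ] K))) x, x⟫_ℂ).re ∧
      ρ * (⟪(opAbs (S - ⟪S x, x⟫_ℂ • (1 : K →L[ℂ] K))) x, x⟫_ℂ).re ≤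
        ρ * Real.sqrt ((⟪(S ∘L S) x, x⟫_ℂ).re - ((⟪S x, x⟫_ℂ).re) ^ 2) := by
  have hxx : ⟪x, x⟫_ℂ = 1 := by
    rw [inner_self_eq_norm_sq_to_K, hx]; norm_num
  set m : ℝ := (⟪S x, x⟫_ℂ).re with hm_def
  have hm : ⟪S x, x⟫_ℂ = (m : ℂ) := by
    exact (Complex.conj_eq_iff_re.mp (hS.isSymmetric.conj_inner_sym x x)).symm
  have hSN : IsStarNormal S := hS.isStarNormal
  -- spectrum facts
  have hspecC : ∀ z ∈ spectrum ℂ S, z = (z.re : ℂ) ∧ z.re ∈ Set.Icc γ Γ := fun z hz =>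
    ⟨hS.mem_spectrum_eq_re hz, hspec (hS.spectrumRestricts.apply_mem hz)⟩
  have hsub : spectrum ℂ S ⊆ (fun t : ℝ => (t : ℂ)) '' Set.Icc γ Γ := fun z hz =>
    ⟨z.re, (hspecC z hz).2, ((hspecC z hz).1).symm⟩
  have hgc : ContinuousOn g (spectrum ℂ S) := hg.mono hsub
  have hgcr : ContinuousOn (fun t : ℝ => g (t : ℂ)) (spectrum ℝ S) := by
    apply hg.comp Complex.continuous_ofReal.continuousOn
    exact fun t ht => ⟨t, hspec ht, rfl⟩
  set H := cfc g S with hH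
  set h : ℂ → ℂ := fun z => (z - (m : ℂ)) * (g z - lam) with hh
  have hhc : ContinuousOn h (spectrum ℂ S) := by
    rw [hh]
    exact ((continuous_id.sub continuous_const).continuousOn).mul (hgc.sub continuousOn_const)
  have hAid : cfc (fun z : ℂ => z - (m : ℂ)) S = S - (m : ℂ) • 1 := by
    rw [cfc_sub _ _ S (by fun_prop) (by fun_prop), cfc_id' ℂ S hSN, cfc_const _ S hSN,
      Algebra.algebraMap_eq_smul_one]
  have hcfch : cfc h S = (S - (m : ℂ) • 1) * (H - lam • 1) := by
    rw [hh, cfc_mul (fun z : ℂ => z - (m : ℂ)) (fun z => g z - lam) S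
      (by fun_prop) (hgc.sub continuousOn_const), hAid,
      cfc_sub _ _ S hgc continuousOn_const, cfc_const _ S hSN,
      Algebra.algebraMap_eq_smul_one, hH]
  set w : ℂ := ⟪(cfc h S) x, x⟫_ℂ with hwdef
  have hw : ⟪(S ∘L H) x, x⟫_ℂ - ⟪S x, x⟫_ℂ * ⟪H x, x⟫_ℂ = w := by
    rw [hwdef, hcfch]
    have hop : (S - (m : ℂ) • 1) * (H - lam • 1)
        = S * H - lam • S - (m : ℂ) • H + ((m : ℂ) * lam) • (1 : K →L[ℂ] K) := by
      simp only [sub_mul, mul_sub, smul_mul_assoc, mul_smul_comm, one_mul, mul_one, smul_smul]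
      module
    rw [hop]
    simp only [ContinuousLinearMap.add_apply, ContinuousLinearMap.sub_apply,
      ContinuousLinearMap.smul_apply, ContinuousLinearMap.one_apply,
      ContinuousLinearMap.mul_apply, ContinuousLinearMap.coe_comp', Function.comp_apply,
      inner_add_left, inner_sub_left, inner_smul_left, hxx, hm, map_mul, Complex.conj_ofReal]
    ring
  -- the unit scalar d
  set d : ℂ := if w = 0 then 1 else w / ‖w‖ with hd_def
  have hd1 : ‖d‖ = 1 := by
    rw [hd_def]; split
    · simp
    · rename_i h0
      rw [norm_div, Complex.norm_real, Real.norm_eq_abs, abs_norm,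
        div_self (norm_ne_zero_iff.mpr h0)]
  have hdw : (starRingEnd ℂ) d * w = (‖w‖ : ℂ) := by
    rw [hd_def]; split
    · rename_i h0; simp [h0]
    · rename_i h0
      have hne : (‖w‖ : ℂ) ≠ 0 := Complex.ofReal_ne_zero.mpr (norm_ne_zero_iff.mpr h0)
      rw [map_div₀, Complex.conj_ofReal, div_mul_eq_mul_div, Complex.conj_mul', sq,
        mul_div_assoc, div_self hne, mul_one]
  have hdw' : d * (starRingEnd ℂ) w = (‖w‖ : ℂ) := by
    rw [← Complex.conj_conj d, ← map_mul, hdw, Complex.conj_ofReal]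
  -- real functions
  set φ : ℝ → ℝ := fun t => |t - m| with hφ
  have hφc : Continuous φ := by rw [hφ]; exact (continuous_id.sub continuous_const).abs
  set P := cfc φ S with hP
  have hPsa : IsSelfAdjoint P := cfc_predicate φ S
  have hPpos : 0 ≤ P := cfc_nonneg (fun t _ => abs_nonneg _)
  set hre : ℝ → ℝ := fun t => (d * h (t : ℂ)).re with hhre
  have hhrec : ContinuousOn hre (spectrum ℝ S) := by
    rw [hhre, hh]
    exact Complex.continuous_re.comp_continuousOn <| continuousOn_const.mul <|
      ((Complex.continuous_ofReal.sub continuous_const).continuousOn).mul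
        (hgcr.sub continuousOn_const)
  -- bridge: cfc of `hre` in terms of complex cfc of `h`
  have hbridge : cfc hre S
      = (2 : ℂ)⁻¹ • (d • cfc h S + ((starRingEnd ℂ) d) • star (cfc h S)) := by
    rw [cfc_real_eq_complex hre hS]
    have e1 : cfc (fun z : ℂ => ((hre z.re : ℝ) : ℂ)) S
        = cfc (fun z : ℂ => (2 : ℂ)⁻¹ * (d * h z + star d * star (h z))) S := by
      apply cfc_congr
      intro z hz
      have hz' := (hspecC z hz).1
      simp only [hhre, Complex.star_def]
      rw [← hz', ← map_mul, Complex.add_conj]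
      push_cast
      ring
    rw [e1, cfc_const_mul _ (fun z => d * h z + star d * star (h z)) S
        ((continuousOn_const.mul hhc).add (continuousOn_const.mul hhc.star)),
      cfc_add S (fun z => d * h z) (fun z => star d * star (h z))
        (continuousOn_const.mul hhc) (continuousOn_const.mul hhc.star),
      cfc_const_mul _ _ S hhc, cfc_const_mul _ _ S hhc.star, cfc_star]
    rfl
  have hstarinner : ⟪(star (cfc h S)) x, x⟫_ℂ = (starRingEnd ℂ) w := by
    rw [ContinuousLinearMap.star_eq_adjoint, ContinuousLinearMap.adjoint_inner_left,
      ← inner_conj_symm, hwdef]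
  have hinner_hre : (⟪(cfc hre S) x, x⟫_ℂ).re = ‖w‖ := by
    have : ⟪(cfc hre S) x, x⟫_ℂ = (‖w‖ : ℂ) := by
      rw [hbridge]
      simp only [ContinuousLinearMap.smul_apply, ContinuousLinearMap.add_apply,
        inner_smul_left, inner_add_left, hstarinner, ← hwdef, map_mul, Complex.conj_conj,
        hdw]
      rw [hdw']
      have c2 : (starRingEnd ℂ) ((2 : ℂ)⁻¹) = (2 : ℂ)⁻¹ := by
        rw [map_inv₀, map_ofNat]
      rw [c2]; ring
    rw [this, Complex.ofReal_re]
  -- main positivity step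
  have hkey : ‖w‖ ≤ ρ * (⟪P x, x⟫_ℂ).re := by
    have hpos : 0 ≤ cfc (fun t => ρ * φ t - hre t) S := by
      apply cfc_nonneg
      intro t ht
      have hb := hbound t (hspec ht)
      have : hre t ≤ ρ * φ t := by
        simp only [hhre, hh, hφ]
        calc (d * (((t : ℂ) - (m : ℂ)) * (g t - lam))).re
            ≤ ‖d * (((t : ℂ) - (m : ℂ)) * (g t - lam))‖ := Complex.re_le_norm _
          _ = ‖d * (((t : ℂ) - (m : ℂ)) * (g t - lam))‖ := rfl
          _ = ‖(t : ℂ) - (m : ℂ)‖ * ‖g t - lam‖ := by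
              rw [norm_mul, norm_mul, hd1, one_mul]
          _ = |t - m| * ‖g t - lam‖ := by
              rw [← Complex.ofReal_sub, Complex.norm_real, Real.norm_eq_abs]
          _ ≤ |t - m| * ρ := mul_le_mul_of_nonneg_left hb (abs_nonneg _)
          _ = ρ * |t - m| := mul_comm _ _
      linarith
    have hsplit : cfc (fun t => ρ * φ t - hre t) S = ρ • P - cfc hre S := by
      rw [cfc_sub (fun t => ρ * φ t) hre S ((continuous_const.mul hφc).continuousOn) hhrec,
        cfc_const_mul ρ φ S hφc.continuousOn, hP]
    rw [hsplit] at hpos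
    have hpos' : 0 ≤ (⟪(ρ • P - cfc hre S) x, x⟫_ℂ).re :=
      (Complex.nonneg_iff.mp
        (((ContinuousLinearMap.nonneg_iff_isPositive _).mp hpos).inner_nonneg_left x)).1
    have hsmul : ⟪(ρ • P) x, x⟫_ℂ = (ρ : ℂ) * ⟪P x, x⟫_ℂ := by
      rw [ContinuousLinearMap.smul_apply, RCLike.real_smul_eq_coe_smul (K := ℂ),
        inner_smul_left]
      simp [Complex.conj_ofReal]
    rw [ContinuousLinearMap.sub_apply, inner_sub_left] at hpos'
    rw [Complex.sub_re] at hpos'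
    rw [hsmul] at hpos'
    rw [hinner_hre] at hpos'
    have : ((ρ : ℂ) * ⟪P x, x⟫_ℂ).re = ρ * (⟪P x, x⟫_ℂ).re := by
      rw [Complex.mul_re, Complex.ofReal_re, Complex.ofReal_im]; ring
    rw [this] at hpos'
    linarith
  -- opAbs identification
  have hstarA : star (S - ⟪S x, x⟫_ℂ • (1 : K →L[ℂ] K)) = S - ⟪S x, x⟫_ℂ • 1 := by
    rw [hm, star_sub, star_smul, hS.star_eq, star_one, Complex.star_def, Complex.conj_ofReal]
  have hPP : P * P = star (S - ⟪S x, x⟫_ℂ • (1 : K →L[ℂ] K)) * (S - ⟪S x, x⟫_ℂ • 1) := by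
    rw [hstarA, hm, ← hAid,
      ← cfc_mul (fun z : ℂ => z - (m : ℂ)) (fun z : ℂ => z - (m : ℂ)) S
        (by fun_prop) (by fun_prop),
      hP, ← cfc_mul φ φ S hφc.continuousOn hφc.continuousOn]
    have e2 : (fun t : ℝ => φ t * φ t) = fun t : ℝ => (t - m) * (t - m) := by
      rw [hφ]; exact funext fun t => abs_mul_abs_self _
    rw [e2, cfc_real_eq_complex (fun t : ℝ => (t - m) * (t - m)) hS]
    apply cfc_congr
    intro z hz
    have hz' := (hspecC z hz).1
    push_cast
    rw [← hz']
  have hopAbs : opAbs (S - ⟪S x, x⟫_ℂ • (1 : K →L[ℂ] K)) = P := by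
    rw [opAbs, ← hPP, CFC.sqrt_mul_self P hPpos]
  -- second inequality
  have hPx : ‖P x‖ ^ 2 = (⟪(S ∘L S) x, x⟫_ℂ).re - m ^ 2 := by
    have h1 : (⟪P x, P x⟫_ℂ) = ⟪((P * P) : K →L[ℂ] K) x, x⟫_ℂ := by
      rw [ContinuousLinearMap.mul_apply]
      exact (hPsa.isSymmetric (P x) x).symm
    have h2 : ((P * P) : K →L[ℂ] K) x
        = S (S x) - (m : ℂ) • S x - (m : ℂ) • S x + ((m : ℂ) * (m : ℂ)) • x := by
      rw [hPP, hstarA, hm]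
      simp only [sub_mul, mul_sub, smul_mul_assoc, mul_smul_comm, one_mul, mul_one, smul_smul]
      simp only [ContinuousLinearMap.add_apply, ContinuousLinearMap.sub_apply,
        ContinuousLinearMap.smul_apply, ContinuousLinearMap.one_apply,
        ContinuousLinearMap.mul_apply]
      module
    have h3 : ⟪S (S x), x⟫_ℂ = ⟪(S ∘L S) x, x⟫_ℂ := rfl
    have h0 : ‖P x‖ ^ 2 = (⟪P x, P x⟫_ℂ).re := by
      rw [← inner_self_eq_norm_sq (𝕜 := ℂ)]; rfl
    rw [h0, h1, h2]
    simp only [inner_add_left, inner_sub_left, inner_smul_left, hxx, hm, h3,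
      Complex.conj_ofReal, map_mul]
    have h4 : ⟪x, S x⟫_ℂ = (m : ℂ) := by rw [← inner_conj_symm, hm, Complex.conj_ofReal]
    simp only [Complex.add_re, Complex.sub_re, Complex.mul_re, Complex.ofReal_re,
      Complex.ofReal_im, Complex.one_re, Complex.one_im, mul_one]
    ring
  have hP_le : (⟪P x, x⟫_ℂ).re ≤ Real.sqrt ((⟪(S ∘L S) x, x⟫_ℂ).re - m ^ 2) := by
    calc (⟪P x, x⟫_ℂ).re ≤ ‖P x‖ * ‖x‖ := re_inner_le_norm (𝕜 := ℂ) _ _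
      _ = ‖P x‖ := by rw [hx, mul_one]
      _ = Real.sqrt (‖P x‖ ^ 2) := (Real.sqrt_sq (norm_nonneg _)).symm
      _ = _ := by rw [hPx]
  constructor
  · rw [hopAbs, hw]
    exact hkey
  · rw [hopAbs]
    exact mul_le_mul_of_nonneg_left hP_le hρ.le
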